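/- arXiv:1604.00498 — 3 statements merged into one kernel-verified Lean document; each statement's English description precedes it below -/
import Mathlib

section
/- Let r_i, r_j be distinct points in a horizontal plane at horizontal distance s apart, both on a circle of radius a centered at c in that plane (so s ≤ 2a), and let T be the upward apex of the equilateral triangle on [r_i, r_j]. If a point p lies on the segment [r_i, T] at distance δ ∈ [0, s] from r_i, then the horizontal distance from p to c is at most √(a² − (s² − (s−δ)²)/4). -/
noncomputable section

abbrev E3 := EuclideanSpace ℝ (Fin 3)

/-- Unit vector in the positive `z` direction. -/
def ez : E3 := EuclideanSpace.single 2 1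

/-- Distance between the horizontal (xy) projections of two points. -/
def distHoriz (p q : E3) : ℝ := Real.sqrt ((p 0 - q 0)^2 + (p 1 - q 1)^2)

/-- `x` lies on the lateral surface of the right circular cone with vertex `V`,
axis parallel to the z-axis and semi-vertical angle `45°`. -/
def onCone (V x : E3) : Prop := distHoriz x V = V 2 - x 2

/-- If `r_i, r_j` lie on a circle of radius `a` centred at `c` in a horizontal plane
and a point moves distance `δ ∈ [0, s]` from `r_i` along the side `[r_i, T]` of the
upward equilateral triangle, its horizontal distance from `c` is at most
`√(a² − (s² − (s−δ)²)/4)`. -/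
theorem stmt4 (c ri rj T p : E3) (a s δ : ℝ)
    (hzi : ri 2 = c 2) (hzj : rj 2 = c 2) (hne : ri ≠ rj)
    (hri : dist ri c = a) (hrj : dist rj c = a)
    (hs : s = dist ri rj)
    (hT : T = midpoint ℝ ri rj + (s * Real.sqrt 3 / 2) • ez)
    (hδ0 : 0 ≤ δ) (hδs : δ ≤ s) (hp : p = ri + (δ / s) • (T - ri)) :
    distHoriz p c ≤ Real.sqrt (a ^ 2 - (s ^ 2 - (s - δ) ^ 2) / 4) := by
  have hs0 : 0 < s := by rw [hs]; exact dist_pos.2 hne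
  have hdist : ∀ x y : E3, dist x y = Real.sqrt ((x 0 - y 0)^2 + (x 1 - y 1)^2 + (x 2 - y 2)^2) := by
    intro x y
    rw [EuclideanSpace.dist_eq, Fin.sum_univ_three]
    simp [Real.dist_eq, sq_abs]
  have sqf : ∀ (x y : E3) (r : ℝ), dist x y = r →
      (x 0 - y 0)^2 + (x 1 - y 1)^2 + (x 2 - y 2)^2 = r^2 := by
    intro x y r h
    have := hdist x y
    rw [h] at this
    have hnn : 0 ≤ (x 0 - y 0)^2 + (x 1 - y 1)^2 + (x 2 - y 2)^2 := by positivity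
    rw [this, Real.sq_sqrt hnn]
  have h1 := sqf ri c a hri
  have h2 := sqf rj c a hrj
  have h3 := sqf ri rj s hs.symm
  rw [hzi] at h1 h3
  rw [hzj] at h2 h3
  simp only [sub_self, ne_eq, OfNat.ofNat_ne_zero, not_false_eq_true, zero_pow, add_zero] at h1 h2 h3
  have hp0 : p 0 - c 0 = (ri 0 - c 0) + (δ / s) * ((rj 0 - ri 0)/2) := by
    simp [hp, hT, midpoint_eq_smul_add, ez, EuclideanSpace.single_apply]
    ring
  have hp1 : p 1 - c 1 = (ri 1 - c 1) + (δ / s) * ((rj 1 - ri 1)/2) := by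
    simp [hp, hT, midpoint_eq_smul_add, ez, EuclideanSpace.single_apply]
    ring
  have key : (p 0 - c 0)^2 + (p 1 - c 1)^2 = a ^ 2 - (s ^ 2 - (s - δ) ^ 2) / 4 := by
    rw [hp0, hp1]
    field_simp
    linear_combination (16*s^2 - 8*s*δ) * h1 + (8*s*δ) * h2 + (4*δ^2 - 8*s*δ) * h3
  rw [distHoriz, key]
end
end

section
/- Let r_i, r_j be points on a circle of radius a centered at c in a horizontal plane with s = dist(r_i, r_j) > δ > 0, and let p = r_i + (δ/s)(T − r_i) where T is the upward apex of the equilateral triangle on [r_i, r_j]. Then the horizontal distance from p to c is at most √(a² − δ(2s − δ)/4) < a, i.e., the decrease a − dist_horiz(p, c) is bounded below by a positive quantity depending only on a, s, δ. -/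
noncomputable section

/-- Quantified shrinking of the enclosing radius: after moving distance `δ` with
`0 < δ < s` along the triangle side, the horizontal distance from the centre is at
most `√(a² − δ(2s − δ)/4)`, which is strictly less than `a`. -/
theorem stmt9 (c ri rj T p : E3) (a s δ : ℝ) (ha : 0 < a)
    (hzi : ri 2 = c 2) (hzj : rj 2 = c 2)
    (hri : dist ri c = a) (hrj : dist rj c = a)
    (hs : s = dist ri rj) (hδ0 : 0 < δ) (hδs : δ < s)
    (hT : T = midpoint ℝ ri rj + (s * Real.sqrt 3 / 2) • ez)
    (hp : p = ri + (δ / s) • (T - ri)) :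
    distHoriz p c ≤ Real.sqrt (a ^ 2 - δ * (2 * s - δ) / 4) ∧
      Real.sqrt (a ^ 2 - δ * (2 * s - δ) / 4) < a := by
  have hs0 : (0:ℝ) < s := lt_trans hδ0 hδs
  have hsne : s ≠ 0 := ne_of_gt hs0
  -- squared distance facts
  have hri2 : (ri 0 - c 0)^2 + (ri 1 - c 1)^2 = a^2 := by
    have := hri
    rw [EuclideanSpace.dist_eq] at this
    have h2 : ∑ i, dist (ri i) (c i) ^ 2 = a ^ 2 := by
      rw [← this, Real.sq_sqrt] <;> positivity
    simp [Fin.sum_univ_three, Real.dist_eq, hzi, sq_abs] at h2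
    linarith [sq_abs (ri 0 - c 0), sq_abs (ri 1 - c 1)]
  have hrj2 : (rj 0 - c 0)^2 + (rj 1 - c 1)^2 = a^2 := by
    have := hrj
    rw [EuclideanSpace.dist_eq] at this
    have h2 : ∑ i, dist (rj i) (c i) ^ 2 = a ^ 2 := by
      rw [← this, Real.sq_sqrt] <;> positivity
    simp [Fin.sum_univ_three, Real.dist_eq, hzj, sq_abs] at h2
    linarith [sq_abs (rj 0 - c 0), sq_abs (rj 1 - c 1)]
  have hs2 : (ri 0 - rj 0)^2 + (ri 1 - rj 1)^2 = s^2 := by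
    have := hs
    rw [EuclideanSpace.dist_eq] at this
    have h2 : ∑ i, dist (ri i) (rj i) ^ 2 = s ^ 2 := by
      rw [this, Real.sq_sqrt]; positivity
    have hz : ri 2 - rj 2 = 0 := by rw [hzi, hzj]; ring
    simp [Fin.sum_univ_three, Real.dist_eq, sq_abs] at h2
    rw [hz] at h2
    nlinarith [h2]
  -- horizontal components of p
  have hp0 : p 0 = ri 0 + (δ / s) * ((ri 0 + rj 0)/2 - ri 0) := by
    rw [hp, hT]
    simp [ez, midpoint_eq_smul_add, EuclideanSpace.single_apply]
    ring_nf
    tauto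
  have hp1 : p 1 = ri 1 + (δ / s) * ((ri 1 + rj 1)/2 - ri 1) := by
    rw [hp, hT]
    simp [ez, midpoint_eq_smul_add, EuclideanSpace.single_apply]
    ring_nf
    tauto
  have key : (p 0 - c 0)^2 + (p 1 - c 1)^2 = a ^ 2 - δ * (2 * s - δ) / 4 := by
    rw [hp0, hp1]
    field_simp
    linear_combination (16*s^2 - 8*s*δ)*hri2 + 8*s*δ*hrj2 + (4*δ^2 - 8*s*δ)*hs2
  have hnn : 0 ≤ a ^ 2 - δ * (2 * s - δ) / 4 := by
    rw [← key]; positivity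
  have hlt : Real.sqrt (a ^ 2 - δ * (2 * s - δ) / 4) < a := by
    have hpos : 0 < δ * (2 * s - δ) / 4 := by
      have h1 : 0 < 2 * s - δ := by linarith
      positivity
    calc Real.sqrt (a ^ 2 - δ * (2 * s - δ) / 4) < Real.sqrt (a ^ 2) := by
          apply Real.sqrt_lt_sqrt hnn
          linarith
      _ = a := by rw [Real.sqrt_sq ha.le]
  refine ⟨?_, hlt⟩
  unfold distHoriz
  rw [key]
end
end

section
/- Let p be a point on a circle of radius a > 0 centered at c in a horizontal plane and V = c + a·e_z. If x is a point on the segment [p, V] at distance at least δ from p with 0 < δ ≤ a√2, then the horizontal distance of x from c is at most a − δ/√2; in particular, this horizontal distance is strictly less than a. -/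
noncomputable section

/-- A point of the segment `[p, V]` at distance at least `δ` from the base point `p`
has horizontal distance from `c` at most `a − δ/√2`, in particular strictly less
than `a`. -/
theorem stmt10 (c p V x : E3) (a δ : ℝ) (ha : 0 < a)
    (hpc : dist p c = a) (hpz : p 2 = c 2) (hV : V = c + a • ez)
    (hx : x ∈ segment ℝ p V) (hδ0 : 0 < δ) (hδ : δ ≤ a * Real.sqrt 2)
    (hmoved : δ ≤ dist p x) :
    distHoriz x c ≤ a - δ / Real.sqrt 2 ∧ distHoriz x c < a := by
  obtain ⟨s, t, hs, ht, hst, rfl⟩ := hx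
  have hV0 : V 0 = c 0 := by simp [hV, ez, EuclideanSpace.single_apply]
  have hV1 : V 1 = c 1 := by simp [hV, ez, EuclideanSpace.single_apply]
  have hV2 : V 2 = c 2 + a := by simp [hV, ez, EuclideanSpace.single_apply]
  have h2 : Real.sqrt 2 ^ 2 = 2 := Real.sq_sqrt (by norm_num)
  have hsq : (p 0 - c 0) ^ 2 + (p 1 - c 1) ^ 2 = a ^ 2 := by
    rw [EuclideanSpace.dist_eq] at hpc
    have h2' : Real.sqrt (∑ i : Fin 3, dist (p i) (c i) ^ 2) ^ 2 = a ^ 2 := by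
      rw [hpc]
    rw [Real.sq_sqrt (by positivity)] at h2'
    simp only [Fin.sum_univ_three, Real.dist_eq, sq_abs] at h2'
    rw [hpz] at h2'
    simpa using h2'
  have hxapp : ∀ i, (s • p + t • V) i = s * p i + t * V i := by
    intro i; simp
  have sqrt2 : (0:ℝ) < Real.sqrt 2 := by positivity
  have hdh : distHoriz (s • p + t • V) c = s * a := by
    unfold distHoriz
    rw [hxapp, hxapp, hV0, hV1]
    have e0 : s * p 0 + t * c 0 - c 0 = s * (p 0 - c 0) := by
      linear_combination c 0 * hst
    have e1 : s * p 1 + t * c 1 - c 1 = s * (p 1 - c 1) := by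
      linear_combination c 1 * hst
    rw [e0, e1]
    have : (s * (p 0 - c 0)) ^ 2 + (s * (p 1 - c 1)) ^ 2 = (s * a) ^ 2 := by
      linear_combination s ^ 2 * hsq
    rw [this, Real.sqrt_sq (by positivity)]
  have hdp : dist p (s • p + t • V) = t * (a * Real.sqrt 2) := by
    rw [EuclideanSpace.dist_eq, Fin.sum_univ_three]
    simp only [Real.dist_eq, sq_abs]
    rw [hxapp, hxapp, hxapp, hV0, hV1, hV2]
    have e0 : p 0 - (s * p 0 + t * c 0) = t * (p 0 - c 0) := by
      linear_combination (-(p 0)) * hst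
    have e1 : p 1 - (s * p 1 + t * c 1) = t * (p 1 - c 1) := by
      linear_combination (-(p 1)) * hst
    have e2 : p 2 - (s * p 2 + t * (c 2 + a)) = t * (-a) := by
      rw [hpz]; linear_combination (-(c 2)) * hst
    rw [e0, e1, e2]
    have : (t * (p 0 - c 0)) ^ 2 + (t * (p 1 - c 1)) ^ 2 + (t * (-a)) ^ 2
        = (t * (a * Real.sqrt 2)) ^ 2 := by
      linear_combination t ^ 2 * hsq - t ^ 2 * a ^ 2 * h2
    rw [this, Real.sqrt_sq (by positivity)]
  rw [hdp] at hmoved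
  rw [hdh]
  have ht' : δ / (a * Real.sqrt 2) ≤ t := by
    rw [div_le_iff₀ (by positivity)]
    linarith
  have hda : δ / Real.sqrt 2 = (δ / (a * Real.sqrt 2)) * a := by
    field_simp
  have key : s * a ≤ a - δ / Real.sqrt 2 := by
    have hs1 : s = 1 - t := by linarith
    rw [hs1, hda]
    nlinarith [mul_le_mul_of_nonneg_right ht' ha.le]
  refine ⟨key, lt_of_le_of_lt key ?_⟩
  have : 0 < δ / Real.sqrt 2 := by positivity
  linarith
end
end
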